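/- Consider a reversible reaction graph on c vertices (finite edge set E, maps t, h : E → Fin c with t e ≠ h e, positive constants k⁺, k⁻ : E → ℝ, and Laplacian L as below) with no parallel edges (distinct edges have distinct underlying unordered vertex pairs). Let ρ : Fin c → ℝ be strictly positive with the kernel of v ↦ L *ᵥ v equal to the span of ρ. Then the following are equivalent: (1) L * Matrix.diagonal ρ is symmetric; (2) for every edge e, Real.log (k⁺ e / k⁻ e) = Real.log (ρ (h e)) − Real.log (ρ (t e)); (3) there exists x : Fin c → ℝ with Real.log (k⁺ e / k⁻ e) = x (h e) − x (t e) for every edge e (formal balancing). (Theorem 2 of the paper.) -/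
import Mathlib


open Matrix

/-- The weighted Laplacian matrix of a reversible reaction graph on `c` vertices,
with edge set `E`, tail and head maps `t, h`, and forward and reverse reaction
constants `kp, km`. -/
def reactionLaplacian (c : ℕ) {E : Type*} [Fintype E]
    (t h : E → Fin c) (kp km : E → ℝ) : Matrix (Fin c) (Fin c) ℝ :=
  fun i j =>
    if i = j then
      (∑ e ∈ Finset.univ.filter (fun e => t e = j), kp e) +
        (∑ e ∈ Finset.univ.filter (fun e => h e = j), km e)
    else
      -((∑ e ∈ Finset.univ.filter (fun e => t e = j ∧ h e = i), kp e) +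
        (∑ e ∈ Finset.univ.filter (fun e => t e = i ∧ h e = j), km e))

private lemma fiber_sum {c : ℕ} {E : Type*} [Fintype E] (t h : E → Fin c)
    (i : Fin c) (f : E → ℝ) :
    ∑ j : Fin c, ∑ e ∈ Finset.univ.filter (fun e => t e = j ∧ h e = i), f e
      = ∑ e ∈ Finset.univ.filter (fun e => h e = i), f e := by
  rw [← Finset.sum_fiberwise (Finset.univ.filter (fun e => h e = i)) t f]
  refine Finset.sum_congr rfl fun j _ => ?_
  congr 1
  ext e
  simp [and_comm]

private lemma log_to_mul {a b x y : ℝ} (ha : 0 < a) (hb : 0 < b) (hx : 0 < x) (hy : 0 < y)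
    (hl : Real.log (a / b) = Real.log y - Real.log x) : a * x = b * y := by
  have hlog : Real.log (a * x) = Real.log (b * y) := by
    rw [Real.log_mul ha.ne' hx.ne', Real.log_mul hb.ne' hy.ne']
    rw [Real.log_div ha.ne' hb.ne'] at hl
    linarith
  calc a * x = Real.exp (Real.log (a * x)) := (Real.exp_log (by positivity)).symm
    _ = Real.exp (Real.log (b * y)) := by rw [hlog]
    _ = b * y := Real.exp_log (by positivity)

private lemma mul_to_log {a b x y : ℝ} (ha : 0 < a) (hb : 0 < b) (hx : 0 < x) (hy : 0 < y)
    (hm : a * x = b * y) : Real.log (a / b) = Real.log y - Real.log x := by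
  have hlog : Real.log (a * x) = Real.log (b * y) := by rw [hm]
  rw [Real.log_mul ha.ne' hx.ne', Real.log_mul hb.ne' hy.ne'] at hlog
  rw [Real.log_div ha.ne' hb.ne']
  linarith

private lemma bal_symm {c : ℕ} {E : Type*} [Fintype E]
    (t h : E → Fin c) (kp km : E → ℝ) (σ : Fin c → ℝ)
    (hbal : ∀ e, kp e * σ (t e) = km e * σ (h e)) :
    (reactionLaplacian c t h kp km * Matrix.diagonal σ).IsSymm := by
  refine Matrix.IsSymm.ext fun i j => ?_
  rw [Matrix.mul_diagonal, Matrix.mul_diagonal]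
  rcases eq_or_ne i j with rfl | hij
  · rfl
  · simp only [reactionLaplacian, if_neg hij, if_neg (Ne.symm hij)]
    have e1 : ∑ e ∈ Finset.univ.filter (fun e => t e = i ∧ h e = j), kp e * σ i
        = ∑ e ∈ Finset.univ.filter (fun e => t e = i ∧ h e = j), km e * σ j := by
      refine Finset.sum_congr rfl fun e he => ?_
      obtain ⟨hte, hhe⟩ := (Finset.mem_filter.mp he).2
      rw [← hte, ← hhe]; exact hbal e
    have e2 : ∑ e ∈ Finset.univ.filter (fun e => t e = j ∧ h e = i), km e * σ i
        = ∑ e ∈ Finset.univ.filter (fun e => t e = j ∧ h e = i), kp e * σ j := by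
      refine Finset.sum_congr rfl fun e he => ?_
      obtain ⟨hte, hhe⟩ := (Finset.mem_filter.mp he).2
      rw [← hte, ← hhe]; exact (hbal e).symm
    rw [neg_mul, neg_mul, add_mul, add_mul, Finset.sum_mul, Finset.sum_mul,
      Finset.sum_mul, Finset.sum_mul, e1, e2]
    ring

private lemma bal_mulVec {c : ℕ} {E : Type*} [Fintype E]
    (t h : E → Fin c) (hth : ∀ e, t e ≠ h e) (kp km : E → ℝ) (σ : Fin c → ℝ)
    (hbal : ∀ e, kp e * σ (t e) = km e * σ (h e)) :
    reactionLaplacian c t h kp km *ᵥ σ = 0 := by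
  funext i
  have hmv : (reactionLaplacian c t h kp km *ᵥ σ) i
      = ∑ j : Fin c, reactionLaplacian c t h kp km i j * σ j := by
    simp [Matrix.mulVec, dotProduct]
  have hemp : Finset.univ.filter (fun e => t e = i ∧ h e = i) = (∅ : Finset E) := by
    ext e
    simp only [Finset.mem_filter, Finset.mem_univ, true_and, Finset.notMem_empty,
      iff_false, not_and]
    intro h1 h2
    exact hth e (h1.trans h2.symm)
  have key : ∀ j : Fin c, reactionLaplacian c t h kp km i j * σ j
      = (if i = j then
          ((∑ e ∈ Finset.univ.filter (fun e => t e = i), kp e * σ i)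
            + (∑ e ∈ Finset.univ.filter (fun e => h e = i), km e * σ i)) else 0)
        - ((∑ e ∈ Finset.univ.filter (fun e => t e = j ∧ h e = i), kp e * σ j)
          + (∑ e ∈ Finset.univ.filter (fun e => t e = i ∧ h e = j), km e * σ j)) := by
    intro j
    rcases eq_or_ne i j with rfl | hij
    · rw [if_pos rfl]
      show (if i = i then _ else _) * σ i = _
      rw [if_pos rfl, hemp]
      simp [add_mul, Finset.sum_mul]
    · rw [if_neg hij]
      show (if i = j then _ else _) * σ j = _
      rw [if_neg hij, neg_mul, add_mul, Finset.sum_mul, Finset.sum_mul]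
      ring
  rw [hmv, Finset.sum_congr rfl (fun j _ => key j), Finset.sum_sub_distrib,
    Finset.sum_ite_eq, if_pos (Finset.mem_univ i), Finset.sum_add_distrib, Pi.zero_apply]
  have hB : ∑ j : Fin c, ∑ e ∈ Finset.univ.filter (fun e => t e = j ∧ h e = i), kp e * σ j
      = ∑ e ∈ Finset.univ.filter (fun e => h e = i), kp e * σ (t e) := by
    rw [← fiber_sum t h i (fun e => kp e * σ (t e))]
    refine Finset.sum_congr rfl fun j _ => Finset.sum_congr rfl fun e he => ?_
    rw [(Finset.mem_filter.mp he).2.1]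
  have hC : ∑ j : Fin c, ∑ e ∈ Finset.univ.filter (fun e => t e = i ∧ h e = j), km e * σ j
      = ∑ e ∈ Finset.univ.filter (fun e => t e = i), km e * σ (h e) := by
    rw [← fiber_sum h t i (fun e => km e * σ (h e))]
    refine Finset.sum_congr rfl fun j _ => ?_
    have heq : Finset.univ.filter (fun e => t e = i ∧ h e = j)
        = Finset.univ.filter (fun e => h e = j ∧ t e = i) := by
      ext e; simp [and_comm]
    rw [heq]
    refine Finset.sum_congr rfl fun e he => ?_
    rw [(Finset.mem_filter.mp he).2.1]
  rw [hB, hC]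
  have e1 : ∑ e ∈ Finset.univ.filter (fun e => t e = i), kp e * σ i
      = ∑ e ∈ Finset.univ.filter (fun e => t e = i), km e * σ (h e) := by
    refine Finset.sum_congr rfl fun e he => ?_
    rw [← (Finset.mem_filter.mp he).2]
    exact hbal e
  have e2 : ∑ e ∈ Finset.univ.filter (fun e => h e = i), km e * σ i
      = ∑ e ∈ Finset.univ.filter (fun e => h e = i), kp e * σ (t e) := by
    refine Finset.sum_congr rfl fun e he => ?_
    rw [← (Finset.mem_filter.mp he).2]
    exact (hbal e).symm
  rw [e1, e2]
  ring

theorem symmetric_tfae_log_Keq_tfae_formally_balanced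
    (c : ℕ) (hc : 0 < c) (E : Type*) [Fintype E]
    (t h : E → Fin c) (hth : ∀ e, t e ≠ h e)
    (hpar : Function.Injective (fun e => ({t e, h e} : Finset (Fin c))))
    (kp km : E → ℝ) (hkp : ∀ e, 0 < kp e) (hkm : ∀ e, 0 < km e)
    (ρ : Fin c → ℝ) (hρ : ∀ i, 0 < ρ i)
    (hker : LinearMap.ker (reactionLaplacian c t h kp km).mulVecLin =
      Submodule.span ℝ {ρ}) :
    [ (reactionLaplacian c t h kp km * Matrix.diagonal ρ).IsSymm,
      ∀ e, Real.log (kp e / km e) = Real.log (ρ (h e)) - Real.log (ρ (t e)),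
      ∃ x : Fin c → ℝ, ∀ e, Real.log (kp e / km e) = x (h e) - x (t e) ].TFAE := by
  tfae_have 2 → 3
  | h2 => ⟨fun i => Real.log (ρ i), h2⟩
  tfae_have 2 → 1
  | h2 => by
    refine bal_symm t h kp km ρ fun e => ?_
    exact log_to_mul (hkp e) (hkm e) (hρ _) (hρ _) (h2 e)
  tfae_have 1 → 2
  | h1 => by
    intro e
    have hf1 : Finset.univ.filter (fun e' => t e' = t e ∧ h e' = h e) = {e} := by
      ext e'
      simp only [Finset.mem_filter, Finset.mem_univ, true_and, Finset.mem_singleton]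
      constructor
      · rintro ⟨h1', h2'⟩
        exact hpar (by simp only [h1', h2'])
      · rintro rfl; exact ⟨rfl, rfl⟩
    have hf2 : Finset.univ.filter (fun e' => t e' = h e ∧ h e' = t e) = (∅ : Finset E) := by
      ext e'
      simp only [Finset.mem_filter, Finset.mem_univ, true_and, Finset.notMem_empty,
        iff_false, not_and]
      intro h1' h2'
      have heq : e' = e := hpar (by
        show ({t e', h e'} : Finset (Fin c)) = {t e, h e}
        rw [h1', h2']
        exact Finset.pair_comm _ _)
      subst heq
      exact hth e' (h1'.symm ▸ (h2'.symm ▸ rfl))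
    have hsym := h1.apply (t e) (h e)
    rw [Matrix.mul_diagonal, Matrix.mul_diagonal] at hsym
    have hL1 : reactionLaplacian c t h kp km (h e) (t e) = -(kp e) := by
      simp only [reactionLaplacian, if_neg (Ne.symm (hth e)), hf1, hf2]
      simp
    have hL2 : reactionLaplacian c t h kp km (t e) (h e) = -(km e) := by
      simp only [reactionLaplacian, if_neg (hth e), hf1, hf2]
      simp
    rw [hL1, hL2] at hsym
    have hmul : kp e * ρ (t e) = km e * ρ (h e) := by linarith
    exact mul_to_log (hkp e) (hkm e) (hρ _) (hρ _) hmul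
  tfae_have 3 → 2
  | ⟨x, hx⟩ => by
    set σ : Fin c → ℝ := fun i => Real.exp (x i) with hσ
    have hbalσ : ∀ e, kp e * σ (t e) = km e * σ (h e) := fun e =>
      log_to_mul (hkp e) (hkm e) (Real.exp_pos _) (Real.exp_pos _)
        (by simp only [hσ, Real.log_exp]; exact hx e)
    have hmem : σ ∈ LinearMap.ker (reactionLaplacian c t h kp km).mulVecLin := by
      rw [LinearMap.mem_ker, Matrix.mulVecLin_apply]
      exact bal_mulVec t h hth kp km σ hbalσ
    rw [hker] at hmem
    obtain ⟨a, ha⟩ := Submodule.mem_span_singleton.mp hmem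
    have ha0 : 0 < a := by
      have := congrFun ha ⟨0, hc⟩
      simp only [Pi.smul_apply, smul_eq_mul] at this
      nlinarith [Real.exp_pos (x ⟨0, hc⟩), hρ ⟨0, hc⟩]
    intro e
    have h1 := hbalσ e
    rw [← congrFun ha (t e), ← congrFun ha (h e)] at h1
    simp only [Pi.smul_apply, smul_eq_mul] at h1
    have hmul : kp e * ρ (t e) = km e * ρ (h e) := by
      have := mul_left_cancel₀ ha0.ne' (by linarith : a * (kp e * ρ (t e)) = a * (km e * ρ (h e)))
      exact this
    exact mul_to_log (hkp e) (hkm e) (hρ _) (hρ _) hmul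
  tfae_finish
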